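/- Let E be a real inner product space, let T > 0 and κ ≥ 0, and let γ : ℝ → E be a twice continuously differentiable curve such that for all t ∈ [0, T] one has ‖γ(t)‖ = 1, ‖γ'(t)‖ = 1, and ‖γ''(t)‖ ≤ κ. Then for every t ∈ [0, T], ⟨γ'(t), γ(0)⟩ ≤ -t + κ²t³/6. -/

import Mathlib

open RealInnerProductSpace

open Set in
theorem stmt_0 {E : Type*} [NormedAddCommGroup E] [InnerProductSpace ℝ E]
    (T κ : ℝ) (hT : 0 < T) (hκ : 0 ≤ κ) (γ : ℝ → E)
    (hγ : ContDiff ℝ 2 γ)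
    (hsphere : ∀ t ∈ Set.Icc (0 : ℝ) T, ‖γ t‖ = 1)
    (hspeed : ∀ t ∈ Set.Icc (0 : ℝ) T, ‖deriv γ t‖ = 1)
    (hcurv : ∀ t ∈ Set.Icc (0 : ℝ) T, ‖deriv (deriv γ) t‖ ≤ κ) :
    ∀ t ∈ Set.Icc (0 : ℝ) T, ⟪deriv γ t, γ 0⟫ ≤ -t + κ ^ 2 * t ^ 3 / 6 := by
  have hd1 : Differentiable ℝ γ := hγ.differentiable (by norm_num)
  have hγ' : ContDiff ℝ 1 (deriv γ) := by
    have := (contDiff_succ_iff_deriv (n := 1)).mp (by exact_mod_cast hγ)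
    exact this.2.2
  have hd2 : Differentiable ℝ (deriv γ) := hγ'.differentiable one_ne_zero
  have hud : UniqueDiffOn ℝ (Icc (0:ℝ) T) := uniqueDiffOn_Icc hT
  -- ⟪γ' t, γ t⟫ = 0 on [0, T]
  have horth : ∀ t ∈ Icc (0:ℝ) T, ⟪deriv γ t, γ t⟫ = 0 := by
    intro t ht
    have h1 : HasDerivWithinAt (fun s => ⟪γ s, γ s⟫)
        (⟪γ t, deriv γ t⟫ + ⟪deriv γ t, γ t⟫) (Icc 0 T) t :=
      ((hd1 t).hasDerivAt.inner ℝ (hd1 t).hasDerivAt).hasDerivWithinAt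
    have h2 : HasDerivWithinAt (fun s => ⟪γ s, γ s⟫) 0 (Icc 0 T) t := by
      refine (hasDerivWithinAt_const t _ (1:ℝ)).congr (fun s hs => ?_) ?_
      · rw [real_inner_self_eq_norm_sq, hsphere s hs]; norm_num
      · rw [real_inner_self_eq_norm_sq, hsphere t ht]; norm_num
    have := (hud t ht).eq_deriv _ h1 h2
    linarith [real_inner_comm (γ t) (deriv γ t)]
  -- ⟪γ'' t, γ' t⟫ = 0 on [0, T]
  have horth2 : ∀ t ∈ Icc (0:ℝ) T, ⟪deriv (deriv γ) t, deriv γ t⟫ = 0 := by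
    intro t ht
    have h1 : HasDerivWithinAt (fun s => ⟪deriv γ s, deriv γ s⟫)
        (⟪deriv γ t, deriv (deriv γ) t⟫ + ⟪deriv (deriv γ) t, deriv γ t⟫) (Icc 0 T) t :=
      ((hd2 t).hasDerivAt.inner ℝ (hd2 t).hasDerivAt).hasDerivWithinAt
    have h2 : HasDerivWithinAt (fun s => ⟪deriv γ s, deriv γ s⟫) 0 (Icc 0 T) t := by
      refine (hasDerivWithinAt_const t _ (1:ℝ)).congr (fun s hs => ?_) ?_
      · rw [real_inner_self_eq_norm_sq, hspeed s hs]; norm_num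
      · rw [real_inner_self_eq_norm_sq, hspeed t ht]; norm_num
    have := (hud t ht).eq_deriv _ h1 h2
    linarith [real_inner_comm (deriv γ t) (deriv (deriv γ) t)]
  -- ⟪γ'' t, γ t⟫ = -1 on [0, T]
  have hacc : ∀ t ∈ Icc (0:ℝ) T, ⟪deriv (deriv γ) t, γ t⟫ = -1 := by
    intro t ht
    have h1 : HasDerivWithinAt (fun s => ⟪deriv γ s, γ s⟫)
        (⟪deriv γ t, deriv γ t⟫ + ⟪deriv (deriv γ) t, γ t⟫) (Icc 0 T) t :=
      ((hd2 t).hasDerivAt.inner ℝ (hd1 t).hasDerivAt).hasDerivWithinAt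
    have h2 : HasDerivWithinAt (fun s => ⟪deriv γ s, γ s⟫) 0 (Icc 0 T) t := by
      refine (hasDerivWithinAt_const t _ (0:ℝ)).congr (fun s hs => horth s hs) (horth t ht)
    have h3 := (hud t ht).eq_deriv _ h1 h2
    have h4 : ⟪deriv γ t, deriv γ t⟫ = 1 := by
      rw [real_inner_self_eq_norm_sq, hspeed t ht]; norm_num
    linarith
  -- the Taylor remainder R
    -- R t = γ 0 - γ t + t • γ' t, R' t = t • γ'' t
  set R : ℝ → E := fun t => γ 0 - γ t + t • deriv γ t with hR
  have hRderiv : ∀ t : ℝ, HasDerivAt R (t • deriv (deriv γ) t) t := by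
    intro t
    have h1 : HasDerivAt (fun s : ℝ => s • deriv γ s)
        (deriv γ t + t • deriv (deriv γ) t) t := by
      have := (hasDerivAt_id t).fun_smul (hd2 t).hasDerivAt
      simpa [one_smul, add_comm] using this
    have h2 : HasDerivAt (fun s => γ 0 - γ s) (-(deriv γ t)) t := by
      simpa using (hasDerivAt_const t (γ 0)).fun_sub (hd1 t).hasDerivAt
    have := h2.fun_add h1
    convert this using 1
    abel
  have hRbound : ∀ t ∈ Icc (0:ℝ) T, ‖R t‖ ≤ κ * t ^ 2 / 2 := by
    have hcont : ContinuousOn R (Icc 0 T) :=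
      (fun x _ => ((hRderiv x).differentiableAt.continuousAt).continuousWithinAt)
    have R0 : ‖R 0‖ ≤ κ * (0:ℝ) ^ 2 / 2 := by simp [hR]
    have hB : ∀ x : ℝ, HasDerivAt (fun s => κ * s ^ 2 / 2) (κ * x) x := by
      intro x
      have : HasDerivAt (fun s : ℝ => κ * s ^ 2 / 2) (κ * (2 * x ^ 1) / 2) x :=
        ((hasDerivAt_pow 2 x).const_mul κ).div_const 2
      convert this using 1
      ring
    exact fun t ht =>
      image_norm_le_of_norm_deriv_right_le_deriv_boundary hcont
        (fun x hx => (hRderiv x).hasDerivWithinAt) R0 hB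
        (fun x hx => by
          have hx' : x ∈ Icc (0:ℝ) T := ⟨hx.1, hx.2.le⟩
          calc ‖x • deriv (deriv γ) x‖ = |x| * ‖deriv (deriv γ) x‖ := by
                rw [norm_smul, Real.norm_eq_abs]
            _ ≤ x * κ := by
                rw [abs_of_nonneg hx.1]
                exact mul_le_mul_of_nonneg_left (hcurv x hx') hx.1
            _ = κ * x := mul_comm _ _) ht
  -- key derivative bound: ⟪γ'' s, γ 0⟫ ≤ -1 + κ^2 s^2 / 2 on [0, T]
  have hkey : ∀ s ∈ Icc (0:ℝ) T, ⟪deriv (deriv γ) s, γ 0⟫ ≤ -1 + κ ^ 2 * s ^ 2 / 2 := by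
    intro s hs
    have hdecomp : γ 0 = R s + γ s - s • deriv γ s := by simp [hR]; abel
    have : ⟪deriv (deriv γ) s, γ 0⟫
        = ⟪deriv (deriv γ) s, R s⟫ + ⟪deriv (deriv γ) s, γ s⟫
          - s * ⟪deriv (deriv γ) s, deriv γ s⟫ := by
      rw [hdecomp, inner_sub_right, inner_add_right, real_inner_smul_right]
    rw [this, hacc s hs, horth2 s hs]
    have h1 : ⟪deriv (deriv γ) s, R s⟫ ≤ κ * (κ * s ^ 2 / 2) := by
      calc ⟪deriv (deriv γ) s, R s⟫ ≤ ‖deriv (deriv γ) s‖ * ‖R s‖ := real_inner_le_norm _ _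
        _ ≤ κ * (κ * s ^ 2 / 2) :=
            mul_le_mul (hcurv s hs) (hRbound s hs) (norm_nonneg _) hκ
    nlinarith
  -- conclude by monotonicity of F s = -s + κ^2 s^3/6 - ⟪γ' s, γ 0⟫
  intro t ht
  set F : ℝ → ℝ := fun s => -s + κ ^ 2 * s ^ 3 / 6 - ⟪deriv γ s, γ 0⟫ with hF
  have hFderiv : ∀ s : ℝ, HasDerivAt F
      (-1 + κ ^ 2 * s ^ 2 / 2 - ⟪deriv (deriv γ) s, γ 0⟫) s := by
    intro s
    have h1 : HasDerivAt (fun u : ℝ => -u + κ ^ 2 * u ^ 3 / 6)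
        (-1 + κ ^ 2 * s ^ 2 / 2) s := by
      have := ((hasDerivAt_pow 3 s).const_mul (κ ^ 2)).div_const 6
      have h := (hasDerivAt_id s).fun_neg.fun_add this
      refine h.congr_deriv ?_
      push_cast; ring
    have h2 : HasDerivAt (fun u => ⟪deriv γ u, γ 0⟫)
        (⟪deriv γ s, 0⟫ + ⟪deriv (deriv γ) s, γ 0⟫) s :=
      (hd2 s).hasDerivAt.inner ℝ (hasDerivAt_const s (γ 0))
    have := h1.fun_sub h2
    simpa using this
  have hmono : MonotoneOn F (Icc 0 T) := by
    apply monotoneOn_of_deriv_nonneg (convex_Icc 0 T)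
    · exact fun x _ => ((hFderiv x).differentiableAt.continuousAt).continuousWithinAt
    · intro x hx
      exact (hFderiv x).differentiableAt.differentiableWithinAt
    · intro x hx
      rw [interior_Icc] at hx
      rw [(hFderiv x).deriv]
      have := hkey x ⟨hx.1.le, hx.2.le⟩
      linarith
  have h0 : F 0 = 0 := by
    simp [hF, horth 0 (left_mem_Icc.mpr hT.le)]
  have := hmono (left_mem_Icc.mpr hT.le) ht ht.1
  rw [h0] at this
  simp only [hF] at this
  linarith
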